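/- Under the hypotheses of the cross-dataset learnability bound, if the cross-dataset learnability of target feature φ_t equals 1 − ε for some ε ∈ (0,1), then the number of samples satisfies P ≥ σ² λ_t⁻¹ (1−ε) |⟨φ_t, y⟩_q| / √(E_D[φ_t²] · E_D[y²]). -/

import Mathlib

open MeasureTheory Matrix

namespace SCAux
open Filter Set Topology

variable {Y : Type*} [MeasurableSpace Y]

lemma integrable_mul {μ : Measure Y} {f g : Y → ℝ}
    (hfm : AEStronglyMeasurable f μ) (hgm : AEStronglyMeasurable g μ)
    (hf2 : Integrable (fun x => f x ^ 2) μ) (hg2 : Integrable (fun x => g x ^ 2) μ) :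
    Integrable (fun x => f x * g x) μ := by
  refine Integrable.mono ((hf2.add hg2).div_const 2) (hfm.mul hgm) ?_
  filter_upwards with x
  have h1 : |f x * g x| ≤ (f x ^ 2 + g x ^ 2) / 2 := by
    rw [abs_mul]
    nlinarith [sq_nonneg (|f x| - |g x|), sq_abs (f x), sq_abs (g x), abs_nonneg (f x),
      abs_nonneg (g x)]
  have h2 : (f x ^ 2 + g x ^ 2) / 2 ≤ ‖(f x ^ 2 + g x ^ 2) / 2‖ := le_abs_self _
  calc ‖f x * g x‖ = |f x * g x| := rfl
    _ ≤ _ := le_trans h1 h2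

lemma abs_integral_mul_le {μ : Measure Y} {f g : Y → ℝ}
    (hfm : AEStronglyMeasurable f μ) (hgm : AEStronglyMeasurable g μ)
    (hf2 : Integrable (fun x => f x ^ 2) μ) (hg2 : Integrable (fun x => g x ^ 2) μ) :
    |∫ x, f x * g x ∂μ| ≤ Real.sqrt (∫ x, f x ^ 2 ∂μ) * Real.sqrt (∫ x, g x ^ 2 ∂μ) := by
  have hfg : Integrable (fun x => |f x * g x|) μ :=
    (integrable_mul hfm hgm hf2 hg2).abs
  set A := ∫ x, f x ^ 2 ∂μ with hA
  set B := ∫ x, g x ^ 2 ∂μ with hB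
  set C := ∫ x, |f x * g x| ∂μ with hC
  have hA0 : 0 ≤ A := integral_nonneg fun x => sq_nonneg _
  have hB0 : 0 ≤ B := integral_nonneg fun x => sq_nonneg _
  have hC0 : 0 ≤ C := integral_nonneg fun x => abs_nonneg _
  have hq : ∀ s : ℝ, 0 ≤ A * (s * s) + (2 * C) * s + B := by
    intro s
    have hint : Integrable (fun x => (s * s) * f x ^ 2 + (2 * s) * |f x * g x| + g x ^ 2) μ :=
      (((hf2.const_mul _).add (hfg.const_mul _)).add hg2)
    have h1 : 0 ≤ ∫ x, ((s * s) * f x ^ 2 + (2 * s) * |f x * g x| + g x ^ 2) ∂μ := by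
      refine integral_nonneg fun x => ?_
      have : (s * s) * f x ^ 2 + (2 * s) * |f x * g x| + g x ^ 2 =
          (s * |f x| + |g x|) ^ 2 := by
        rw [abs_mul]
        nlinarith [sq_abs (f x), sq_abs (g x)]
      rw [this]; exact sq_nonneg _
    have e1 : ∫ x, ((s * s) * f x ^ 2 + (2 * s) * |f x * g x| + g x ^ 2) ∂μ =
        (∫ x, ((s * s) * f x ^ 2 + (2 * s) * |f x * g x|) ∂μ) + ∫ x, g x ^ 2 ∂μ :=
      integral_add ((hf2.const_mul _).add (hfg.const_mul _)) hg2
    have e2 : ∫ x, ((s * s) * f x ^ 2 + (2 * s) * |f x * g x|) ∂μ =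
        (∫ x, (s * s) * f x ^ 2 ∂μ) + ∫ x, (2 * s) * |f x * g x| ∂μ :=
      integral_add (hf2.const_mul _) (hfg.const_mul _)
    have h2 : ∫ x, ((s * s) * f x ^ 2 + (2 * s) * |f x * g x| + g x ^ 2) ∂μ =
        (s * s) * A + (2 * s) * C + B := by
      rw [e1, e2, integral_const_mul, integral_const_mul]
    rw [h2] at h1
    nlinarith
  have hd := discrim_le_zero hq
  rw [discrim] at hd
  have hCsq : C ^ 2 ≤ A * B := by nlinarith
  have h1 : C ≤ Real.sqrt (A * B) := by
    have := Real.sqrt_le_sqrt hCsq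
    rwa [Real.sqrt_sq hC0] at this
  calc |∫ x, f x * g x ∂μ| ≤ C := by
        rw [hC]
        simpa [abs_mul] using norm_integral_le_integral_norm (μ := μ) (fun x => f x * g x)
    _ ≤ Real.sqrt (A * B) := h1
    _ = Real.sqrt A * Real.sqrt B := Real.sqrt_mul hA0 B


lemma bessel {μ : Measure Y} {ι : Type*} [DecidableEq ι] (φ : ι → Y → ℝ)
    (hmeas : ∀ i, Measurable (φ i))
    (hint : ∀ i j, Integrable (fun x => φ i x * φ j x) μ)
    (horth : ∀ i j, ∫ x, φ i x * φ j x ∂μ = if i = j then 1 else 0)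
    {f : Y → ℝ} (hfm : AEStronglyMeasurable f μ) (hf2 : Integrable (fun x => f x ^ 2) μ)
    (F : Finset ι) :
    ∑ i ∈ F, (∫ x, f x * φ i x ∂μ) ^ 2 ≤ ∫ x, f x ^ 2 ∂μ := by
  set c : ι → ℝ := fun i => ∫ x, f x * φ i x ∂μ with hc
  have hφ2 : ∀ i, Integrable (fun x => φ i x ^ 2) μ := by
    intro i
    have := hint i i
    refine this.congr ?_
    filter_upwards with x
    ring
  have hfφ : ∀ i, Integrable (fun x => f x * φ i x) μ := fun i =>
    integrable_mul hfm (hmeas i).aestronglyMeasurable hf2 (hφ2 i)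
  -- h := ∑ i ∈ F, c i * φ i
  have hfh : Integrable (fun x => f x * ∑ i ∈ F, c i * φ i x) μ := by
    have : (fun x => f x * ∑ i ∈ F, c i * φ i x) =
        fun x => ∑ i ∈ F, c i * (f x * φ i x) := by
      funext x
      rw [Finset.mul_sum]
      exact Finset.sum_congr rfl fun i _ => by ring
    rw [this]
    exact integrable_finset_sum F fun i _ => (hfφ i).const_mul _
  have hh2 : Integrable (fun x => (∑ i ∈ F, c i * φ i x) ^ 2) μ := by
    have : (fun x => (∑ i ∈ F, c i * φ i x) ^ 2) =
        fun x => ∑ i ∈ F, ∑ j ∈ F, (c i * c j) * (φ i x * φ j x) := by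
      funext x
      rw [sq, Finset.sum_mul_sum]
      exact Finset.sum_congr rfl fun i _ => Finset.sum_congr rfl fun j _ => by ring
    rw [this]
    exact integrable_finset_sum F fun i _ =>
      integrable_finset_sum F fun j _ => (hint i j).const_mul _
  have hIfh : ∫ x, f x * ∑ i ∈ F, c i * φ i x ∂μ = ∑ i ∈ F, c i ^ 2 := by
    have e : (fun x => f x * ∑ i ∈ F, c i * φ i x) =
        fun x => ∑ i ∈ F, c i * (f x * φ i x) := by
      funext x
      rw [Finset.mul_sum]
      exact Finset.sum_congr rfl fun i _ => by ring
    rw [e, integral_finset_sum F fun i _ => (hfφ i).const_mul _]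
    refine Finset.sum_congr rfl fun i _ => ?_
    rw [integral_const_mul]
    have : (∫ a, f a * φ i a ∂μ) = c i := rfl
    rw [this]; ring
  have hIh2 : ∫ x, (∑ i ∈ F, c i * φ i x) ^ 2 ∂μ = ∑ i ∈ F, c i ^ 2 := by
    have e : (fun x => (∑ i ∈ F, c i * φ i x) ^ 2) =
        fun x => ∑ i ∈ F, ∑ j ∈ F, (c i * c j) * (φ i x * φ j x) := by
      funext x
      rw [sq, Finset.sum_mul_sum]
      exact Finset.sum_congr rfl fun i _ => Finset.sum_congr rfl fun j _ => by ring
    rw [e, integral_finset_sum F fun i _ => integrable_finset_sum F fun j _ =>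
      (hint i j).const_mul _]
    refine Finset.sum_congr rfl fun i hi => ?_
    rw [integral_finset_sum F fun j _ => (hint i j).const_mul _]
    have : ∀ j ∈ F, (∫ x, (c i * c j) * (φ i x * φ j x) ∂μ) =
        if i = j then c i * c j else 0 := by
      intro j _
      rw [integral_const_mul, horth i j]
      split <;> simp
    rw [Finset.sum_congr rfl this, Finset.sum_ite_eq F i (fun j => c i * c j), if_pos hi]
    ring
  have key : 0 ≤ ∫ x, (f x - ∑ i ∈ F, c i * φ i x) ^ 2 ∂μ :=
    integral_nonneg fun x => sq_nonneg _
  have expand : ∫ x, (f x - ∑ i ∈ F, c i * φ i x) ^ 2 ∂μ =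
      (∫ x, f x ^ 2 ∂μ) - 2 * (∑ i ∈ F, c i ^ 2) + ∑ i ∈ F, c i ^ 2 := by
    have e : (fun x => (f x - ∑ i ∈ F, c i * φ i x) ^ 2) =
        fun x => (f x ^ 2 - 2 * (f x * ∑ i ∈ F, c i * φ i x)) +
          (∑ i ∈ F, c i * φ i x) ^ 2 := by
      funext x; ring
    have h1 : Integrable (fun x => f x ^ 2 - 2 * (f x * ∑ i ∈ F, c i * φ i x)) μ :=
      hf2.sub (hfh.const_mul 2)
    have e1 : ∫ x, ((f x ^ 2 - 2 * (f x * ∑ i ∈ F, c i * φ i x)) +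
        (∑ i ∈ F, c i * φ i x) ^ 2) ∂μ =
        (∫ x, (f x ^ 2 - 2 * (f x * ∑ i ∈ F, c i * φ i x)) ∂μ) +
        ∫ x, (∑ i ∈ F, c i * φ i x) ^ 2 ∂μ := integral_add h1 hh2
    have e2 : ∫ x, (f x ^ 2 - 2 * (f x * ∑ i ∈ F, c i * φ i x)) ∂μ =
        (∫ x, f x ^ 2 ∂μ) - ∫ x, 2 * (f x * ∑ i ∈ F, c i * φ i x) ∂μ :=
      integral_sub hf2 (hfh.const_mul 2)
    rw [e, e1, e2, integral_const_mul, hIfh, hIh2]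
  rw [expand] at key
  linarith


lemma dot_self_nonneg {n : ℕ} (v : Fin n → ℝ) : 0 ≤ v ⬝ᵥ v :=
  Finset.sum_nonneg fun i _ => mul_self_nonneg _

lemma matrix_bound {P : ℕ} (K : Matrix (Fin P) (Fin P) ℝ) (hsym : Kᵀ = K)
    (hpsd : ∀ v : Fin P → ℝ, 0 ≤ v ⬝ᵥ (K *ᵥ v)) {σ2 : ℝ} (hσ2 : 0 < σ2)
    (u v : Fin P → ℝ) :
    |u ⬝ᵥ ((K + σ2 • (1 : Matrix (Fin P) (Fin P) ℝ))⁻¹ *ᵥ v)| ≤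
      σ2⁻¹ * (Real.sqrt (u ⬝ᵥ u) * Real.sqrt (v ⬝ᵥ v)) := by
  set A : Matrix (Fin P) (Fin P) ℝ := K + σ2 • 1 with hA
  have hAsym : Aᵀ = A := by
    rw [hA, Matrix.transpose_add, hsym, Matrix.transpose_smul, Matrix.transpose_one]
  have hmoveA : ∀ x y : Fin P → ℝ, x ⬝ᵥ (A *ᵥ y) = (A *ᵥ x) ⬝ᵥ y := by
    intro x y
    rw [Matrix.dotProduct_mulVec, ← Matrix.mulVec_transpose, hAsym, dotProduct_comm]
  have hmoveK : ∀ x y : Fin P → ℝ, x ⬝ᵥ (K *ᵥ y) = (K *ᵥ x) ⬝ᵥ y := by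
    intro x y
    rw [Matrix.dotProduct_mulVec, ← Matrix.mulVec_transpose, hsym, dotProduct_comm]
  have hAmul : ∀ x : Fin P → ℝ, A *ᵥ x = K *ᵥ x + σ2 • x := by
    intro x
    rw [hA, Matrix.add_mulVec, Matrix.smul_mulVec, Matrix.one_mulVec]
  have hAq : ∀ x : Fin P → ℝ, x ⬝ᵥ (A *ᵥ x) = x ⬝ᵥ (K *ᵥ x) + σ2 * (x ⬝ᵥ x) := by
    intro x
    rw [hAmul, dotProduct_add, dotProduct_smul]
    rfl
  have hAq_pos : ∀ x : Fin P → ℝ, σ2 * (x ⬝ᵥ x) ≤ x ⬝ᵥ (A *ᵥ x) := by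
    intro x
    rw [hAq]
    have := hpsd x
    linarith
  have hdet : IsUnit A.det := by
    rw [isUnit_iff_ne_zero]
    intro hd
    obtain ⟨x, hx0, hx⟩ := Matrix.exists_mulVec_eq_zero_iff.2 hd
    have h1 : (0:ℝ) < x ⬝ᵥ x := by
      rcases (dot_self_nonneg x).lt_or_eq with h | h
      · exact h
      · exfalso
        apply hx0
        funext i
        by_contra hxi
        have : 0 < x ⬝ᵥ x := by
          have : 0 < x i * x i := mul_self_pos.2 hxi
          have h2 : ∀ j ∈ Finset.univ, 0 ≤ x j * x j := fun j _ => mul_self_nonneg _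
          exact Finset.sum_pos' h2 ⟨i, Finset.mem_univ i, this⟩
        rw [← h] at this
        exact lt_irrefl _ this
    have h2 := hAq_pos x
    rw [hx] at h2
    simp only [dotProduct_zero] at h2
    nlinarith
  set M : Matrix (Fin P) (Fin P) ℝ := A⁻¹ with hM
  have hAM : A * M = 1 := Matrix.mul_nonsing_inv A hdet
  have hAMv : ∀ x : Fin P → ℝ, A *ᵥ (M *ᵥ x) = x := by
    intro x
    rw [Matrix.mulVec_mulVec, hAM, Matrix.one_mulVec]
  have hMq : ∀ x : Fin P → ℝ, x ⬝ᵥ (M *ᵥ x) = (M *ᵥ x) ⬝ᵥ (A *ᵥ (M *ᵥ x)) := by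
    intro x
    rw [hmoveA, hAMv x]
  have hMq_nonneg : ∀ x : Fin P → ℝ, 0 ≤ x ⬝ᵥ (M *ᵥ x) := by
    intro x
    rw [hMq]
    exact le_trans (mul_nonneg hσ2.le (dot_self_nonneg _)) (hAq_pos (M *ᵥ x))
  have hMq_le : ∀ x : Fin P → ℝ, x ⬝ᵥ (M *ᵥ x) ≤ σ2⁻¹ * (x ⬝ᵥ x) := by
    intro x
    set w := M *ᵥ x with hw
    set z := K *ᵥ w with hz
    have hxw : x = A *ᵥ w := (hAMv x).symm
    have e1 : x ⬝ᵥ x = z ⬝ᵥ z + 2 * σ2 * (w ⬝ᵥ z) + σ2 ^ 2 * (w ⬝ᵥ w) := by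
      conv_lhs => rw [hxw, hAmul]
      rw [add_dotProduct, dotProduct_add, dotProduct_add,
        smul_dotProduct, dotProduct_smul, smul_dotProduct,
        dotProduct_smul]
      have hzw : z ⬝ᵥ w = w ⬝ᵥ z := dotProduct_comm _ _
      simp only [smul_eq_mul]
      rw [hzw]
      ring
    have e2 : x ⬝ᵥ (M *ᵥ x) = w ⬝ᵥ z + σ2 * (w ⬝ᵥ w) := by
      rw [hMq x, ← hw, hAq, ← hz]
    have h3 : 0 ≤ w ⬝ᵥ z := hpsd w
    have h4 : 0 ≤ z ⬝ᵥ z := dot_self_nonneg z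
    have h5 : σ2 * (x ⬝ᵥ (M *ᵥ x)) ≤ x ⬝ᵥ x := by
      rw [e1, e2]
      nlinarith
    rw [← mul_le_mul_iff_right₀ hσ2]
    calc σ2 * (x ⬝ᵥ (M *ᵥ x)) ≤ x ⬝ᵥ x := h5
      _ = σ2 * (σ2⁻¹ * (x ⬝ᵥ x)) := by
          field_simp
  have hMsym : Mᵀ = M := by
    rw [hM, Matrix.transpose_nonsing_inv, hAsym]
  have hmoveM : ∀ x y : Fin P → ℝ, x ⬝ᵥ (M *ᵥ y) = (M *ᵥ x) ⬝ᵥ y := by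
    intro x y
    rw [Matrix.dotProduct_mulVec, ← Matrix.mulVec_transpose, hMsym, dotProduct_comm]
  -- Cauchy-Schwarz for the bilinear form M
  have hCS : (u ⬝ᵥ (M *ᵥ v)) ^ 2 ≤ (u ⬝ᵥ (M *ᵥ u)) * (v ⬝ᵥ (M *ᵥ v)) := by
    have hq : ∀ s : ℝ, 0 ≤ (v ⬝ᵥ (M *ᵥ v)) * (s * s) + (2 * (u ⬝ᵥ (M *ᵥ v))) * s +
        u ⬝ᵥ (M *ᵥ u) := by
      intro s
      have h0 := hMq_nonneg (u + s • v)
      have e : (u + s • v) ⬝ᵥ (M *ᵥ (u + s • v)) =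
          (v ⬝ᵥ (M *ᵥ v)) * (s * s) + (2 * (u ⬝ᵥ (M *ᵥ v))) * s + u ⬝ᵥ (M *ᵥ u) := by
        rw [Matrix.mulVec_add, Matrix.mulVec_smul, add_dotProduct,
          smul_dotProduct, dotProduct_add, dotProduct_add,
          dotProduct_smul, dotProduct_smul]
        have huv : v ⬝ᵥ (M *ᵥ u) = u ⬝ᵥ (M *ᵥ v) := by
          rw [hmoveM, dotProduct_comm]
        rw [huv]
        simp only [smul_eq_mul]
        ring
      rw [e] at h0
      exact h0
    have hd := discrim_le_zero hq
    rw [discrim] at hd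
    nlinarith
  have h6 : (u ⬝ᵥ (M *ᵥ v)) ^ 2 ≤ (σ2⁻¹ * (u ⬝ᵥ u)) * (σ2⁻¹ * (v ⬝ᵥ v)) := by
    calc (u ⬝ᵥ (M *ᵥ v)) ^ 2 ≤ (u ⬝ᵥ (M *ᵥ u)) * (v ⬝ᵥ (M *ᵥ v)) := hCS
      _ ≤ (σ2⁻¹ * (u ⬝ᵥ u)) * (σ2⁻¹ * (v ⬝ᵥ v)) :=
          mul_le_mul (hMq_le u) (hMq_le v) (hMq_nonneg v)
            (mul_nonneg (by positivity) (dot_self_nonneg u))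
  have h7 : |u ⬝ᵥ (M *ᵥ v)| ≤ Real.sqrt ((σ2⁻¹ * (u ⬝ᵥ u)) * (σ2⁻¹ * (v ⬝ᵥ v))) := by
    have := Real.sqrt_le_sqrt h6
    rwa [Real.sqrt_sq_eq_abs] at this
  have h8 : Real.sqrt ((σ2⁻¹ * (u ⬝ᵥ u)) * (σ2⁻¹ * (v ⬝ᵥ v))) =
      σ2⁻¹ * (Real.sqrt (u ⬝ᵥ u) * Real.sqrt (v ⬝ᵥ v)) := by
    rw [show (σ2⁻¹ * (u ⬝ᵥ u)) * (σ2⁻¹ * (v ⬝ᵥ v)) =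
      (σ2⁻¹ ^ 2) * ((u ⬝ᵥ u) * (v ⬝ᵥ v)) from by ring,
      Real.sqrt_mul (by positivity), Real.sqrt_sq (by positivity),
      Real.sqrt_mul (dot_self_nonneg u)]
  rw [h8] at h7
  exact h7


lemma exists_exhaustion (ι : Type*) [Countable ι] :
    ∃ u : ℕ → Finset ι, Tendsto u atTop atTop :=
  Filter.exists_seq_tendsto _

variable {X : Type*} [MeasurableSpace X]

lemma k_measurable {ι : Type*} [Countable ι] (φ : ι → X → ℝ) (lam : ι → ℝ)
    (hmeas : ∀ i, Measurable (φ i)) (k : X → X → ℝ)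
    (hMercer : ∀ x x', HasSum (fun i => lam i * φ i x * φ i x') (k x x')) :
    Measurable (fun p : X × X => k p.1 p.2) := by
  obtain ⟨u, hu⟩ := exists_exhaustion ι
  refine measurable_of_tendsto_metrizable
    (f := fun m (p : X × X) => ∑ i ∈ u m, lam i * φ i p.1 * φ i p.2) ?_ ?_
  · intro m
    exact Finset.measurable_sum _ fun i _ =>
      (measurable_const.mul ((hmeas i).comp measurable_fst)).mul
        ((hmeas i).comp measurable_snd)
  · rw [tendsto_pi_nhds]
    intro p
    exact (hMercer p.1 p.2).comp hu

lemma tendsto_integral_indicator {q : Measure X} (kd : X → ℝ) (hkdm : Measurable kd)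
    {h : X → ℝ} (hh : Integrable h q) :
    Tendsto (fun n : ℕ => ∫ x, ({x | kd x ≤ (n : ℝ)}).indicator h x ∂q) atTop
      (𝓝 (∫ x, h x ∂q)) := by
  refine tendsto_integral_of_dominated_convergence (fun x => |h x|) ?_ hh.abs ?_ ?_
  · intro n
    exact (hh.aestronglyMeasurable.indicator (measurableSet_le hkdm measurable_const))
  · intro n
    filter_upwards with x
    by_cases hx : x ∈ {x | kd x ≤ (n : ℝ)}
    · rw [Set.indicator_of_mem hx]
      simp [Real.norm_eq_abs]
    · rw [Set.indicator_of_notMem hx]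
      simp [abs_nonneg]
  · filter_upwards with x
    have hev : ∀ᶠ n : ℕ in atTop, ({x | kd x ≤ (n : ℝ)}).indicator h x = h x := by
      rw [eventually_atTop]
      refine ⟨⌈kd x⌉₊, fun n hn => ?_⟩
      have hx : x ∈ {x | kd x ≤ (n : ℝ)} :=
        le_trans (Nat.le_ceil _) (Nat.cast_le.2 hn)
      rw [Set.indicator_of_mem hx]
    exact tendsto_const_nhds.congr' (hev.mono fun n hn => hn.symm)

lemma core (q : Measure X) [IsProbabilityMeasure q]
    {ι : Type*} [Countable ι] [DecidableEq ι]
    (φ : ι → X → ℝ) (lam : ι → ℝ)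
    (hlam : ∀ i, 0 ≤ lam i) (hmeas : ∀ i, Measurable (φ i))
    (horth : ∀ i j, ∫ x, φ i x * φ j x ∂q = if i = j then 1 else 0)
    (k : X → X → ℝ)
    (hMercer : ∀ x x', HasSum (fun i => lam i * φ i x * φ i x') (k x x'))
    (t : ι) (w : ι → ℝ) {W : ℝ} (hW : HasSum (fun i => lam i * w i ^ 2) W)
    {Λ : ℝ} (hΛ0 : 0 ≤ Λ) (hΛ : ∀ i, lam i ≤ Λ)
    {g : X → ℝ} (hg : Integrable g q)
    (hgsum : ∀ x, HasSum (fun i => lam i * w i * (φ t x * φ i x)) (g x)) :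
    ∫ x, g x ∂q = lam t * w t := by
  obtain ⟨u, hu⟩ := exists_exhaustion ι
  -- basic integrability facts
  have hφφ : ∀ i j, Integrable (fun x => φ i x * φ j x) q := by
    intro i j
    have hii : ∀ i, Integrable (fun x => φ i x * φ i x) q := by
      intro i
      by_contra hcon
      have h0 := integral_undef hcon
      rw [horth i i, if_pos rfl] at h0
      exact one_ne_zero h0
    have h2 : ∀ i, Integrable (fun x => φ i x ^ 2) q := by
      intro i
      exact (hii i).congr (by filter_upwards with x; ring)
    exact integrable_mul (hmeas i).aestronglyMeasurable (hmeas j).aestronglyMeasurable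
      (h2 i) (h2 j)
  have hφ2 : ∀ i, Integrable (fun x => φ i x ^ 2) q := fun i =>
    (hφφ i i).congr (by filter_upwards with x; ring)
  have hφabs : ∀ i, Integrable (fun x => |φ i x|) q := by
    intro i
    refine Integrable.mono (((hφ2 i).add (integrable_const 1)).div_const 2)
      ((hmeas i).abs).aestronglyMeasurable ?_
    filter_upwards with x
    have h1 : |φ i x| ≤ (φ i x ^ 2 + 1) / 2 := by nlinarith [sq_nonneg (|φ i x| - 1), sq_abs (φ i x)]
    calc ‖|φ i x|‖ = |φ i x| := by rw [Real.norm_eq_abs, abs_abs]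
      _ ≤ (φ i x ^ 2 + 1) / 2 := h1
      _ ≤ ‖(φ i x ^ 2 + 1) / 2‖ := le_abs_self _
  -- diagonal of the kernel
  have hMdiag : ∀ x, HasSum (fun i => lam i * φ i x ^ 2) (k x x) := by
    intro x
    have := hMercer x x
    rwa [show (fun i => lam i * φ i x * φ i x) = fun i => lam i * φ i x ^ 2 from
      funext fun i => by ring] at this
  have hkd0 : ∀ x, 0 ≤ k x x := fun x =>
    hasSum_le (fun i => mul_nonneg (hlam i) (sq_nonneg _)) hasSum_zero (hMdiag x)
  have hkdm : Measurable (fun x => k x x) :=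
    (k_measurable φ lam hmeas k hMercer).comp (measurable_id.prodMk measurable_id)
  have hW0 : 0 ≤ W :=
    hasSum_le (fun i => mul_nonneg (hlam i) (sq_nonneg _)) hasSum_zero hW
  -- the truncation sets
  set A : ℕ → Set X := fun n => {x | k x x ≤ (n : ℝ)} with hAdef
  have hAmeas : ∀ n, MeasurableSet (A n) := fun n => measurableSet_le hkdm measurable_const
  set a : ℕ → ι → ℝ := fun n i => ∫ x, (A n).indicator (fun x => φ t x * φ i x) x ∂q with ha
  -- partial sums bound
  have hpartial : ∀ (F : Finset ι) (x : X), x ∈ A ((⌈(0:ℝ)⌉₊ : ℕ)) → True := fun _ _ _ => trivial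
  have hsum_bound : ∀ (n : ℕ) (F : Finset ι) (x : X), x ∈ A n →
      |∑ i ∈ F, lam i * w i * φ i x| ≤ Real.sqrt (W * n) := by
    intro n F x hx
    have h1 : (∑ i ∈ F, lam i * w i * φ i x) ^ 2 ≤
        (∑ i ∈ F, lam i * w i ^ 2) * (∑ i ∈ F, lam i * φ i x ^ 2) := by
      have hcs := Finset.sum_mul_sq_le_sq_mul_sq F
        (fun i => Real.sqrt (lam i) * w i) (fun i => Real.sqrt (lam i) * φ i x)
      have e1 : ∀ i, (Real.sqrt (lam i) * w i) * (Real.sqrt (lam i) * φ i x) =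
          lam i * w i * φ i x := by
        intro i
        have h := Real.mul_self_sqrt (hlam i)
        linear_combination (w i * φ i x) * h
      have e2 : ∀ i, (Real.sqrt (lam i) * w i) ^ 2 = lam i * w i ^ 2 := by
        intro i
        rw [mul_pow, Real.sq_sqrt (hlam i)]
      have e3 : ∀ i, (Real.sqrt (lam i) * φ i x) ^ 2 = lam i * φ i x ^ 2 := by
        intro i
        rw [mul_pow, Real.sq_sqrt (hlam i)]
      calc (∑ i ∈ F, lam i * w i * φ i x) ^ 2
          = (∑ i ∈ F, (Real.sqrt (lam i) * w i) * (Real.sqrt (lam i) * φ i x)) ^ 2 := by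
            rw [Finset.sum_congr rfl fun i _ => (e1 i).symm]
        _ ≤ (∑ i ∈ F, (Real.sqrt (lam i) * w i) ^ 2) *
            (∑ i ∈ F, (Real.sqrt (lam i) * φ i x) ^ 2) := hcs
        _ = (∑ i ∈ F, lam i * w i ^ 2) * (∑ i ∈ F, lam i * φ i x ^ 2) := by
            rw [Finset.sum_congr rfl fun i _ => e2 i, Finset.sum_congr rfl fun i _ => e3 i]
    have h2 : ∑ i ∈ F, lam i * w i ^ 2 ≤ W :=
      sum_le_hasSum F (fun i _ => mul_nonneg (hlam i) (sq_nonneg _)) hW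
    have h3 : ∑ i ∈ F, lam i * φ i x ^ 2 ≤ (n : ℝ) :=
      le_trans (sum_le_hasSum F (fun i _ => mul_nonneg (hlam i) (sq_nonneg _)) (hMdiag x)) hx
    have h4 : (∑ i ∈ F, lam i * w i * φ i x) ^ 2 ≤ W * n := by
      have hs1 : 0 ≤ ∑ i ∈ F, lam i * w i ^ 2 :=
        Finset.sum_nonneg fun i _ => mul_nonneg (hlam i) (sq_nonneg _)
      have hs2 : 0 ≤ ∑ i ∈ F, lam i * φ i x ^ 2 :=
        Finset.sum_nonneg fun i _ => mul_nonneg (hlam i) (sq_nonneg _)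
      nlinarith
    have := Real.sqrt_le_sqrt h4
    rwa [Real.sqrt_sq_eq_abs] at this
  -- key limit for each truncation level
  have hkey : ∀ n : ℕ, Tendsto (fun m => ∑ i ∈ u m, lam i * w i * a n i) atTop
      (𝓝 (∫ x, (A n).indicator g x ∂q)) := by
    intro n
    have hdct := tendsto_integral_of_dominated_convergence
      (F := fun m => fun x => (A n).indicator
        (fun x => ∑ i ∈ u m, lam i * w i * (φ t x * φ i x)) x)
      (f := (A n).indicator g)
      (bound := fun x => Real.sqrt (W * n) * |φ t x|)
      (fun m => ((Finset.measurable_sum (u m) fun i _ =>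
        (measurable_const.mul ((hmeas t).mul (hmeas i)))).indicator
          (hAmeas n)).aestronglyMeasurable)
      (((hφabs t).const_mul _))
      ?_ ?_
    · have heq : ∀ m, (∫ x, (A n).indicator
          (fun x => ∑ i ∈ u m, lam i * w i * (φ t x * φ i x)) x ∂q) =
          ∑ i ∈ u m, lam i * w i * a n i := by
        intro m
        have e : (fun x => (A n).indicator
            (fun x => ∑ i ∈ u m, lam i * w i * (φ t x * φ i x)) x) =
            fun x => ∑ i ∈ u m, lam i * w i *
              ((A n).indicator (fun x => φ t x * φ i x) x) := by
          funext x
          by_cases hx : x ∈ A n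
          · rw [Set.indicator_of_mem hx]
            exact Finset.sum_congr rfl fun i _ => by rw [Set.indicator_of_mem hx]
          · rw [Set.indicator_of_notMem hx]
            symm
            refine Finset.sum_eq_zero fun i _ => ?_
            rw [Set.indicator_of_notMem hx, mul_zero]
        rw [e, integral_finset_sum (u m) fun i _ =>
          ((hφφ t i).indicator (hAmeas n)).const_mul _]
        exact Finset.sum_congr rfl fun i _ => integral_const_mul _ _
      rw [show (fun m => ∑ i ∈ u m, lam i * w i * a n i) = fun m => ∫ x, (A n).indicator
          (fun x => ∑ i ∈ u m, lam i * w i * (φ t x * φ i x)) x ∂q from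
        funext fun m => (heq m).symm]
      exact hdct
    · intro m
      filter_upwards with x
      by_cases hx : x ∈ A n
      · rw [Set.indicator_of_mem hx]
        have e : ∑ i ∈ u m, lam i * w i * (φ t x * φ i x) =
            φ t x * ∑ i ∈ u m, lam i * w i * φ i x := by
          rw [Finset.mul_sum]
          exact Finset.sum_congr rfl fun i _ => by ring
        rw [Real.norm_eq_abs, e, abs_mul, mul_comm]
        exact mul_le_mul_of_nonneg_right (hsum_bound n (u m) x hx) (abs_nonneg _)
      · rw [Set.indicator_of_notMem hx]
        simp only [norm_zero]
        positivity
    · filter_upwards with x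
      by_cases hx : x ∈ A n
      · have e1 : ∀ m, (A n).indicator
            (fun x => ∑ i ∈ u m, lam i * w i * (φ t x * φ i x)) x =
            ∑ i ∈ u m, lam i * w i * (φ t x * φ i x) := fun m => Set.indicator_of_mem hx _
        rw [show ((A n).indicator g x) = g x from Set.indicator_of_mem hx _]
        refine Tendsto.congr (fun m => (e1 m).symm) ?_
        exact (hgsum x).comp hu
      · have e1 : ∀ m, (A n).indicator
            (fun x => ∑ i ∈ u m, lam i * w i * (φ t x * φ i x)) x = 0 :=
          fun m => Set.indicator_of_notMem hx _
        rw [show ((A n).indicator g x) = 0 from Set.indicator_of_notMem hx _]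
        exact Tendsto.congr (fun m => (e1 m).symm) tendsto_const_nhds
  -- error bound for each truncation level
  have herr : ∀ n : ℕ, |(∫ x, (A n).indicator g x ∂q) - lam t * w t * a n t| ≤
      Real.sqrt (Λ * W * ∫ x, ((A n)ᶜ).indicator (fun x => φ t x ^ 2) x ∂q) := by
    intro n
    set ρ2 := ∫ x, ((A n)ᶜ).indicator (fun x => φ t x ^ 2) x ∂q with hρ2
    have hρ2nn : 0 ≤ ρ2 :=
      integral_nonneg fun x => Set.indicator_nonneg (fun y _ => sq_nonneg _) x
    set fc : X → ℝ := fun x => ((A n)ᶜ).indicator (φ t) x with hfc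
    have hfc_meas : Measurable fc := (hmeas t).indicator (hAmeas n).compl
    have hfcsq : (fun x => fc x ^ 2) = fun x => ((A n)ᶜ).indicator (fun x => φ t x ^ 2) x := by
      funext x
      by_cases hx : x ∈ (A n)ᶜ
      · rw [hfc]
        simp only [Set.indicator_of_mem hx]
      · rw [hfc]
        simp only [Set.indicator_of_notMem hx]
        norm_num
    have hfc2 : Integrable (fun x => fc x ^ 2) q := by
      rw [hfcsq]
      exact (hφ2 t).indicator (hAmeas n).compl
    have hfc2val : ∫ x, fc x ^ 2 ∂q = ρ2 := by rw [hfcsq]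
    have hai : ∀ i, i ≠ t → a n i = -(∫ x, fc x * φ i x ∂q) := by
      intro i hit
      have hind : (fun x => φ t x * φ i x) =
          fun x => (A n).indicator (fun x => φ t x * φ i x) x +
            ((A n)ᶜ).indicator (fun x => φ t x * φ i x) x := by
        funext x
        by_cases hx : x ∈ A n
        · rw [Set.indicator_of_mem hx, Set.indicator_of_notMem (by simpa using hx)]
          ring
        · rw [Set.indicator_of_notMem hx, Set.indicator_of_mem (by simpa using hx)]
          ring
      have hadd : (∫ x, φ t x * φ i x ∂q) =
          (∫ x, (A n).indicator (fun x => φ t x * φ i x) x ∂q) +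
          (∫ x, ((A n)ᶜ).indicator (fun x => φ t x * φ i x) x ∂q) := by
        conv_lhs => rw [hind]
        exact integral_add ((hφφ t i).indicator (hAmeas n)) ((hφφ t i).indicator (hAmeas n).compl)
      have horth0 : ∫ x, φ t x * φ i x ∂q = 0 := by
        rw [horth t i, if_neg (fun hh => hit hh.symm)]
      have e2 : (∫ x, ((A n)ᶜ).indicator (fun x => φ t x * φ i x) x ∂q) =
          ∫ x, fc x * φ i x ∂q := by
        congr 1
        funext x
        by_cases hx : x ∈ (A n)ᶜ
        · rw [Set.indicator_of_mem hx, hfc]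
          simp only [Set.indicator_of_mem hx]
        · rw [Set.indicator_of_notMem hx, hfc]
          simp only [Set.indicator_of_notMem hx, zero_mul]
      rw [horth0] at hadd
      rw [ha]
      simp only
      rw [e2] at hadd
      linarith
    have hstage : ∀ m, t ∈ u m →
        |(∑ i ∈ u m, lam i * w i * a n i) - lam t * w t * a n t| ≤
        Real.sqrt (Λ * W * ρ2) := by
      intro m htm
      have hsplit : ∑ i ∈ u m, lam i * w i * a n i =
          lam t * w t * a n t + ∑ i ∈ (u m).erase t, lam i * w i * a n i :=
        (Finset.add_sum_erase _ _ htm).symm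
      have hbessel : ∑ i ∈ (u m).erase t, (∫ x, fc x * φ i x ∂q) ^ 2 ≤ ρ2 := by
        have := bessel φ hmeas hφφ horth hfc_meas.aestronglyMeasurable hfc2 ((u m).erase t)
        rwa [hfc2val] at this
      have hlw : ∑ i ∈ (u m).erase t, (lam i * w i) ^ 2 ≤ Λ * W := by
        calc ∑ i ∈ (u m).erase t, (lam i * w i) ^ 2
            ≤ ∑ i ∈ (u m).erase t, Λ * (lam i * w i ^ 2) := by
              refine Finset.sum_le_sum fun i _ => ?_
              have h3 : lam i * (lam i * w i ^ 2) ≤ Λ * (lam i * w i ^ 2) :=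
                mul_le_mul_of_nonneg_right (hΛ i) (mul_nonneg (hlam i) (sq_nonneg _))
              calc (lam i * w i) ^ 2 = lam i * (lam i * w i ^ 2) := by ring
                _ ≤ Λ * (lam i * w i ^ 2) := h3
          _ = Λ * ∑ i ∈ (u m).erase t, lam i * w i ^ 2 := (Finset.mul_sum _ _ _).symm
          _ ≤ Λ * W := by
              refine mul_le_mul_of_nonneg_left ?_ hΛ0
              exact sum_le_hasSum _ (fun i _ => mul_nonneg (hlam i) (sq_nonneg _)) hW
      have hsum_eq : ∑ i ∈ (u m).erase t, lam i * w i * a n i =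
          -(∑ i ∈ (u m).erase t, (lam i * w i) * (∫ x, fc x * φ i x ∂q)) := by
        rw [← Finset.sum_neg_distrib]
        refine Finset.sum_congr rfl fun i hi => ?_
        rw [hai i (Finset.ne_of_mem_erase hi)]
        ring
      have hcs := Finset.sum_mul_sq_le_sq_mul_sq ((u m).erase t)
        (fun i => lam i * w i) (fun i => ∫ x, fc x * φ i x ∂q)
      have hsq : (∑ i ∈ (u m).erase t, (lam i * w i) * (∫ x, fc x * φ i x ∂q)) ^ 2 ≤
          Λ * W * ρ2 := by
        have h1 : (0:ℝ) ≤ ∑ i ∈ (u m).erase t, (lam i * w i) ^ 2 :=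
          Finset.sum_nonneg fun i _ => sq_nonneg _
        have h2 : (0:ℝ) ≤ ∑ i ∈ (u m).erase t, (∫ x, fc x * φ i x ∂q) ^ 2 :=
          Finset.sum_nonneg fun i _ => sq_nonneg _
        nlinarith
      have habs : |∑ i ∈ (u m).erase t, (lam i * w i) * (∫ x, fc x * φ i x ∂q)| ≤
          Real.sqrt (Λ * W * ρ2) := by
        have := Real.sqrt_le_sqrt hsq
        rwa [Real.sqrt_sq_eq_abs] at this
      rw [hsplit]
      rw [show lam t * w t * a n t + (∑ i ∈ (u m).erase t, lam i * w i * a n i) -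
        lam t * w t * a n t = ∑ i ∈ (u m).erase t, lam i * w i * a n i from by ring]
      rw [hsum_eq, abs_neg]
      exact habs
    have hmem : ∀ᶠ m in atTop, t ∈ u m := by
      have h1 : ∀ᶠ F in (atTop : Filter (Finset ι)), t ∈ F :=
        eventually_atTop.2 ⟨{t}, fun F hF => hF (Finset.mem_singleton_self t)⟩
      exact hu.eventually h1
    have htend : Tendsto
        (fun m => |(∑ i ∈ u m, lam i * w i * a n i) - lam t * w t * a n t|) atTop
        (𝓝 |(∫ x, (A n).indicator g x ∂q) - lam t * w t * a n t|) :=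
      (((hkey n).sub_const _)).abs
    exact le_of_tendsto htend (hmem.mono hstage)
  -- limits as n → ∞
  have hγ : Tendsto (fun n => a n t) atTop (𝓝 1) := by
    have h1 := tendsto_integral_indicator (q := q) (fun x => k x x) hkdm (hφφ t t)
    rw [horth t t, if_pos rfl] at h1
    exact h1
  have hρ2eq : ∀ n, (∫ x, ((A n)ᶜ).indicator (fun x => φ t x ^ 2) x ∂q) = 1 - a n t := by
    intro n
    have hind : (fun x => φ t x ^ 2) =
        fun x => (A n).indicator (fun x => φ t x * φ t x) x +
          ((A n)ᶜ).indicator (fun x => φ t x ^ 2) x := by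
      funext x
      by_cases hx : x ∈ A n
      · rw [Set.indicator_of_mem hx, Set.indicator_of_notMem (by simpa using hx)]
        ring
      · rw [Set.indicator_of_notMem hx, Set.indicator_of_mem (by simpa using hx)]
        ring
    have hadd : (∫ x, φ t x ^ 2 ∂q) =
        a n t + ∫ x, ((A n)ᶜ).indicator (fun x => φ t x ^ 2) x ∂q := by
      conv_lhs => rw [hind]
      exact integral_add ((hφφ t t).indicator (hAmeas n)) ((hφ2 t).indicator (hAmeas n).compl)
    have h1 : ∫ x, φ t x ^ 2 ∂q = 1 := by
      have h2 : (fun x => φ t x ^ 2) = fun x => φ t x * φ t x := funext fun x => sq (φ t x)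
      rw [h2, horth t t, if_pos rfl]
    rw [h1] at hadd
    linarith
  have hIg : Tendsto (fun n => ∫ x, (A n).indicator g x ∂q) atTop (𝓝 (∫ x, g x ∂q)) :=
    tendsto_integral_indicator (q := q) (fun x => k x x) hkdm hg
  have hbound : Tendsto (fun n => Real.sqrt (Λ * W * (1 - a n t))) atTop (𝓝 0) := by
    have h1 : Tendsto (fun n => Λ * W * (1 - a n t)) atTop (𝓝 (Λ * W * (1 - 1))) :=
      tendsto_const_nhds.mul (tendsto_const_nhds.sub hγ)
    rw [show Λ * W * (1 - 1) = 0 from by ring] at h1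
    have h2 := h1.sqrt
    rwa [Real.sqrt_zero] at h2
  have hzero : Tendsto
      (fun n => (∫ x, (A n).indicator g x ∂q) - lam t * w t * a n t) atTop (𝓝 0) := by
    refine squeeze_zero_norm (fun n => ?_) hbound
    rw [Real.norm_eq_abs]
    calc |(∫ x, (A n).indicator g x ∂q) - lam t * w t * a n t|
        ≤ Real.sqrt (Λ * W * ∫ x, ((A n)ᶜ).indicator (fun x => φ t x ^ 2) x ∂q) := herr n
      _ = Real.sqrt (Λ * W * (1 - a n t)) := by rw [hρ2eq n]
  have hfin : Tendsto (fun n => ∫ x, (A n).indicator g x ∂q) atTop (𝓝 (lam t * w t)) := by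
    have h2 : Tendsto (fun n => lam t * w t * a n t) atTop (𝓝 (lam t * w t)) := by
      have h3 := hγ.const_mul (lam t * w t)
      rwa [mul_one] at h3
    have h4 := hzero.add h2
    rw [zero_add] at h4
    refine h4.congr fun n => ?_
    ring
  exact tendsto_nhds_unique hIg hfin

lemma lam_le (q : Measure X) [IsProbabilityMeasure q]
    {ι : Type*} [Countable ι] [DecidableEq ι]
    (φ : ι → X → ℝ) (lam : ι → ℝ)
    (hlam : ∀ i, 0 ≤ lam i) (hmeas : ∀ i, Measurable (φ i))
    (horth : ∀ i j, ∫ x, φ i x * φ j x ∂q = if i = j then 1 else 0)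
    (k : X → X → ℝ)
    (hMercer : ∀ x x', HasSum (fun i => lam i * φ i x * φ i x') (k x x'))
    (hk2 : Integrable (fun p : X × X => k p.1 p.2 ^ 2) (q.prod q)) (s : ι) :
    lam s ≤ Real.sqrt (∫ p, k p.1 p.2 ^ 2 ∂(q.prod q)) := by
  obtain ⟨u, hu⟩ := exists_exhaustion ι
  have hφφ : ∀ i j, Integrable (fun x => φ i x * φ j x) q := by
    intro i j
    have hii : ∀ i, Integrable (fun x => φ i x * φ i x) q := by
      intro i
      by_contra hcon
      have h0 := integral_undef hcon
      rw [horth i i, if_pos rfl] at h0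
      exact one_ne_zero h0
    have h2 : ∀ i, Integrable (fun x => φ i x ^ 2) q := by
      intro i
      exact (hii i).congr (by filter_upwards with x; ring)
    exact integrable_mul (hmeas i).aestronglyMeasurable (hmeas j).aestronglyMeasurable
      (h2 i) (h2 j)
  have hφ2 : ∀ i, Integrable (fun x => φ i x ^ 2) q := fun i =>
    (hφφ i i).congr (by filter_upwards with x; ring)
  have hφabs : ∀ i, Integrable (fun x => |φ i x|) q := by
    intro i
    refine Integrable.mono (((hφ2 i).add (integrable_const 1)).div_const 2)
      ((hmeas i).abs).aestronglyMeasurable ?_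
    filter_upwards with x
    have h1 : |φ i x| ≤ (φ i x ^ 2 + 1) / 2 := by nlinarith [sq_nonneg (|φ i x| - 1), sq_abs (φ i x)]
    calc ‖|φ i x|‖ = |φ i x| := by rw [Real.norm_eq_abs, abs_abs]
      _ ≤ (φ i x ^ 2 + 1) / 2 := h1
      _ ≤ ‖(φ i x ^ 2 + 1) / 2‖ := le_abs_self _
  have hMdiag : ∀ x, HasSum (fun i => lam i * φ i x ^ 2) (k x x) := by
    intro x
    have := hMercer x x
    rwa [show (fun i => lam i * φ i x * φ i x) = fun i => lam i * φ i x ^ 2 from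
      funext fun i => by ring] at this
  have hkd0 : ∀ x, 0 ≤ k x x := fun x =>
    hasSum_le (fun i => mul_nonneg (hlam i) (sq_nonneg _)) hasSum_zero (hMdiag x)
  have hkmeas : Measurable (fun p : X × X => k p.1 p.2) :=
    k_measurable φ lam hmeas k hMercer
  have hkdm : Measurable (fun x => k x x) :=
    hkmeas.comp (measurable_id.prodMk measurable_id)
  set A : ℕ → Set X := fun n => {x | k x x ≤ (n : ℝ)} with hAdef
  have hAmeas : ∀ n, MeasurableSet (A n) := fun n => measurableSet_le hkdm measurable_const
  set b : ℕ → ι → ℝ := fun n j => ∫ x, (A n).indicator (fun x => φ s x * φ j x) x ∂q with hb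
  -- integrability on the product
  have hΦmeas : Measurable (fun p : X × X => φ s p.1 * φ s p.2) :=
    ((hmeas s).comp measurable_fst).mul ((hmeas s).comp measurable_snd)
  have hΦ2 : Integrable (fun p : X × X => (φ s p.1 * φ s p.2) ^ 2) (q.prod q) := by
    have := (hφ2 s).mul_prod (hφ2 s)
    exact this.congr (by filter_upwards with p; ring)
  have hkΦ : Integrable (fun p : X × X => k p.1 p.2 * (φ s p.1 * φ s p.2)) (q.prod q) :=
    integrable_mul hkmeas.aestronglyMeasurable hΦmeas.aestronglyMeasurable hk2 hΦ2
  set I : ℝ := ∫ p, k p.1 p.2 * (φ s p.1 * φ s p.2) ∂(q.prod q) with hI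
  -- upper bound for I
  have hIle : I ≤ Real.sqrt (∫ p, k p.1 p.2 ^ 2 ∂(q.prod q)) := by
    have h := abs_integral_mul_le hkmeas.aestronglyMeasurable hΦmeas.aestronglyMeasurable
      hk2 hΦ2
    have hΦ2val : ∫ p, (φ s p.1 * φ s p.2) ^ 2 ∂(q.prod q) = 1 := by
      have e : (fun p : X × X => (φ s p.1 * φ s p.2) ^ 2) =
          fun p : X × X => (fun x => φ s x ^ 2) p.1 * (fun x => φ s x ^ 2) p.2 := by
        funext p; ring
      have h4 := integral_prod_mul (μ := q) (ν := q)
        (f := fun x => φ s x ^ 2) (g := fun x => φ s x ^ 2)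
      rw [e, h4]
      have h2 : ∫ x, φ s x ^ 2 ∂q = 1 := by
        have h3 : (fun x => φ s x ^ 2) = fun x => φ s x * φ s x := funext fun x => sq (φ s x)
        rw [h3, horth s s, if_pos rfl]
      rw [h2, mul_one]
    rw [hΦ2val, Real.sqrt_one, mul_one] at h
    exact le_trans (le_abs_self _) h
  -- truncated integrals
  set In : ℕ → ℝ := fun n => ∫ p, ((A n) ×ˢ (A n)).indicator
    (fun p : X × X => k p.1 p.2 * (φ s p.1 * φ s p.2)) p ∂(q.prod q) with hIn
  have hInlim : Tendsto In atTop (𝓝 I) := by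
    refine tendsto_integral_of_dominated_convergence
      (fun p => |k p.1 p.2 * (φ s p.1 * φ s p.2)|) ?_ hkΦ.abs ?_ ?_
    · intro n
      exact (hkΦ.aestronglyMeasurable.indicator ((hAmeas n).prod (hAmeas n)))
    · intro n
      filter_upwards with p
      by_cases hp : p ∈ (A n) ×ˢ (A n)
      · rw [Set.indicator_of_mem hp, Real.norm_eq_abs]
      · rw [Set.indicator_of_notMem hp]
        simp [abs_nonneg]
        positivity
    · filter_upwards with p
      have hev : ∀ᶠ n : ℕ in atTop, ((A n) ×ˢ (A n)).indicator
          (fun p : X × X => k p.1 p.2 * (φ s p.1 * φ s p.2)) p =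
          k p.1 p.2 * (φ s p.1 * φ s p.2) := by
        rw [eventually_atTop]
        refine ⟨max ⌈k p.1 p.1⌉₊ ⌈k p.2 p.2⌉₊, fun n hn => ?_⟩
        have hp1 : p.1 ∈ A n := by
          have : k p.1 p.1 ≤ ((max ⌈k p.1 p.1⌉₊ ⌈k p.2 p.2⌉₊ : ℕ) : ℝ) :=
            le_trans (Nat.le_ceil _) (Nat.cast_le.2 (le_max_left _ _))
          exact le_trans this (Nat.cast_le.2 hn)
        have hp2 : p.2 ∈ A n := by
          have : k p.2 p.2 ≤ ((max ⌈k p.1 p.1⌉₊ ⌈k p.2 p.2⌉₊ : ℕ) : ℝ) :=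
            le_trans (Nat.le_ceil _) (Nat.cast_le.2 (le_max_right _ _))
          exact le_trans this (Nat.cast_le.2 hn)
        rw [Set.indicator_of_mem (Set.mem_prod.2 ⟨hp1, hp2⟩)]
      exact tendsto_const_nhds.congr' (hev.mono fun n hn => hn.symm)
  -- identification of In as a sum
  have hkeyn : ∀ n, Tendsto (fun m => ∑ j ∈ u m, lam j * (b n j) ^ 2) atTop (𝓝 (In n)) := by
    intro n
    have hdct := tendsto_integral_of_dominated_convergence
      (F := fun m => fun p : X × X => ((A n) ×ˢ (A n)).indicator
        (fun p : X × X => (∑ j ∈ u m, lam j * φ j p.1 * φ j p.2) * (φ s p.1 * φ s p.2)) p)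
      (f := ((A n) ×ˢ (A n)).indicator
        (fun p : X × X => k p.1 p.2 * (φ s p.1 * φ s p.2)))
      (bound := fun p => (n : ℝ) * (|φ s p.1| * |φ s p.2|))
      (fun m => (((Finset.measurable_sum (u m) fun j _ =>
        (measurable_const.mul ((hmeas j).comp measurable_fst)).mul
          ((hmeas j).comp measurable_snd)).mul hΦmeas).indicator
            ((hAmeas n).prod (hAmeas n))).aestronglyMeasurable)
      (((hφabs s).mul_prod (hφabs s)).const_mul _)
      ?_ ?_
    · have heq : ∀ m, (∫ p, ((A n) ×ˢ (A n)).indicator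
          (fun p : X × X => (∑ j ∈ u m, lam j * φ j p.1 * φ j p.2) *
            (φ s p.1 * φ s p.2)) p ∂(q.prod q)) =
          ∑ j ∈ u m, lam j * (b n j) ^ 2 := by
        intro m
        have e : (fun p : X × X => ((A n) ×ˢ (A n)).indicator
            (fun p : X × X => (∑ j ∈ u m, lam j * φ j p.1 * φ j p.2) *
              (φ s p.1 * φ s p.2)) p) =
            fun p : X × X => ∑ j ∈ u m, lam j *
              (((A n).indicator (fun x => φ s x * φ j x) p.1) *
               ((A n).indicator (fun x => φ s x * φ j x) p.2)) := by
          funext p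
          by_cases hp1 : p.1 ∈ A n
          · by_cases hp2 : p.2 ∈ A n
            · rw [Set.indicator_of_mem (Set.mem_prod.2 ⟨hp1, hp2⟩), Finset.sum_mul]
              refine Finset.sum_congr rfl fun j _ => ?_
              rw [Set.indicator_of_mem hp1, Set.indicator_of_mem hp2]
              ring
            · rw [Set.indicator_of_notMem (fun hp => hp2 (Set.mem_prod.1 hp).2)]
              symm
              refine Finset.sum_eq_zero fun j _ => ?_
              rw [Set.indicator_of_notMem hp2]
              ring
          · rw [Set.indicator_of_notMem (fun hp => hp1 (Set.mem_prod.1 hp).1)]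
            symm
            refine Finset.sum_eq_zero fun j _ => ?_
            rw [Set.indicator_of_notMem hp1]
            ring
        rw [e, integral_finset_sum (u m) fun j _ =>
          (((hφφ s j).indicator (hAmeas n)).mul_prod
            ((hφφ s j).indicator (hAmeas n))).const_mul _]
        refine Finset.sum_congr rfl fun j _ => ?_
        rw [integral_const_mul]
        have := integral_prod_mul (μ := q) (ν := q)
          (f := fun x => (A n).indicator (fun x => φ s x * φ j x) x)
          (g := fun x => (A n).indicator (fun x => φ s x * φ j x) x)
        rw [this]
        rw [hb]
        simp only
        ring
      rw [show (fun m => ∑ j ∈ u m, lam j * (b n j) ^ 2) = fun m =>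
        ∫ p, ((A n) ×ˢ (A n)).indicator
          (fun p : X × X => (∑ j ∈ u m, lam j * φ j p.1 * φ j p.2) *
            (φ s p.1 * φ s p.2)) p ∂(q.prod q) from funext fun m => (heq m).symm]
      exact hdct
    · intro m
      filter_upwards with p
      by_cases hp : p ∈ (A n) ×ˢ (A n)
      · rw [Set.indicator_of_mem hp]
        obtain ⟨hp1, hp2⟩ := Set.mem_prod.1 hp
        have hT : |∑ j ∈ u m, lam j * φ j p.1 * φ j p.2| ≤ (n : ℝ) := by
          have hcs := Finset.sum_mul_sq_le_sq_mul_sq (u m)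
            (fun j => Real.sqrt (lam j) * φ j p.1) (fun j => Real.sqrt (lam j) * φ j p.2)
          have e1 : ∀ j, (Real.sqrt (lam j) * φ j p.1) * (Real.sqrt (lam j) * φ j p.2) =
              lam j * φ j p.1 * φ j p.2 := by
            intro j
            have h := Real.mul_self_sqrt (hlam j)
            linear_combination (φ j p.1 * φ j p.2) * h
          have e2 : ∀ (x : X) (j : ι), (Real.sqrt (lam j) * φ j x) ^ 2 = lam j * φ j x ^ 2 := by
            intro x j
            rw [mul_pow, Real.sq_sqrt (hlam j)]
          have h1 : (∑ j ∈ u m, lam j * φ j p.1 * φ j p.2) ^ 2 ≤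
              (∑ j ∈ u m, lam j * φ j p.1 ^ 2) * (∑ j ∈ u m, lam j * φ j p.2 ^ 2) := by
            calc (∑ j ∈ u m, lam j * φ j p.1 * φ j p.2) ^ 2
                = (∑ j ∈ u m, (Real.sqrt (lam j) * φ j p.1) *
                    (Real.sqrt (lam j) * φ j p.2)) ^ 2 := by
                  rw [Finset.sum_congr rfl fun j _ => (e1 j).symm]
              _ ≤ (∑ j ∈ u m, (Real.sqrt (lam j) * φ j p.1) ^ 2) *
                  (∑ j ∈ u m, (Real.sqrt (lam j) * φ j p.2) ^ 2) := hcs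
              _ = (∑ j ∈ u m, lam j * φ j p.1 ^ 2) * (∑ j ∈ u m, lam j * φ j p.2 ^ 2) := by
                  rw [Finset.sum_congr rfl fun j _ => e2 p.1 j,
                    Finset.sum_congr rfl fun j _ => e2 p.2 j]
          have h2 : ∑ j ∈ u m, lam j * φ j p.1 ^ 2 ≤ (n : ℝ) :=
            le_trans (sum_le_hasSum _ (fun j _ => mul_nonneg (hlam j) (sq_nonneg _))
              (hMdiag p.1)) hp1
          have h3 : ∑ j ∈ u m, lam j * φ j p.2 ^ 2 ≤ (n : ℝ) :=
            le_trans (sum_le_hasSum _ (fun j _ => mul_nonneg (hlam j) (sq_nonneg _))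
              (hMdiag p.2)) hp2
          have h4 : (0:ℝ) ≤ ∑ j ∈ u m, lam j * φ j p.1 ^ 2 :=
            Finset.sum_nonneg fun j _ => mul_nonneg (hlam j) (sq_nonneg _)
          have h5 : (0:ℝ) ≤ ∑ j ∈ u m, lam j * φ j p.2 ^ 2 :=
            Finset.sum_nonneg fun j _ => mul_nonneg (hlam j) (sq_nonneg _)
          have h6 : (∑ j ∈ u m, lam j * φ j p.1 * φ j p.2) ^ 2 ≤ (n : ℝ) * (n : ℝ) := by
            nlinarith
          have h7 := Real.sqrt_le_sqrt h6
          rwa [Real.sqrt_sq_eq_abs, Real.sqrt_mul_self (Nat.cast_nonneg n)] at h7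
        rw [Real.norm_eq_abs, abs_mul, abs_mul]
        exact mul_le_mul_of_nonneg_right hT (mul_nonneg (abs_nonneg _) (abs_nonneg _))
      · rw [Set.indicator_of_notMem hp]
        simp only [norm_zero]
        positivity
    · filter_upwards with p
      by_cases hp : p ∈ (A n) ×ˢ (A n)
      · simp only [Set.indicator_of_mem hp]
        exact Tendsto.congr (fun m => (Finset.sum_mul _ _ _).symm)
          (((hMercer p.1 p.2).mul_right (φ s p.1 * φ s p.2)).comp hu)
      · simp only [Set.indicator_of_notMem hp]
        exact tendsto_const_nhds
  -- lower bound
  have hlow : ∀ n, lam s * (b n s) ^ 2 ≤ In n := by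
    intro n
    have hmem : ∀ᶠ m in atTop, s ∈ u m := by
      have h1 : ∀ᶠ F in (atTop : Filter (Finset ι)), s ∈ F :=
        eventually_atTop.2 ⟨{s}, fun F hF => hF (Finset.mem_singleton_self s)⟩
      exact hu.eventually h1
    refine ge_of_tendsto (hkeyn n) (hmem.mono fun m hm => ?_)
    exact Finset.single_le_sum (f := fun j => lam j * (b n j) ^ 2)
      (fun j _ => mul_nonneg (hlam j) (sq_nonneg _)) hm
  have hbs : Tendsto (fun n => b n s) atTop (𝓝 1) := by
    have h1 := tendsto_integral_indicator (q := q) (fun x => k x x) hkdm (hφφ s s)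
    rw [horth s s, if_pos rfl] at h1
    exact h1
  have hlhs : Tendsto (fun n => lam s * (b n s) ^ 2) atTop (𝓝 (lam s)) := by
    have h2 : Tendsto (fun n => lam s * (b n s) ^ 2) atTop (𝓝 (lam s * 1 ^ 2)) :=
      tendsto_const_nhds.mul (hbs.pow 2)
    rwa [one_pow, mul_one] at h2
  have : lam s ≤ I := le_of_tendsto_of_tendsto' hlhs hInlim hlow
  exact le_trans this hIle

end SCAux

/-- Sample-complexity corollary. In the Mercer/KRR setting, if the
cross-dataset learnability of feature `φ_t` equals `1 - ε` with `ε ∈ (0,1)`, then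
`P ≥ σ² λ_t⁻¹ (1-ε) |⟨φ_t, y⟩_q| / √(E_D[φ_t²] E_D[y²])`. -/
theorem sample_complexity_lower_bound
    {X : Type*} [MeasurableSpace X] [TopologicalSpace X]
    (q : Measure X) [IsProbabilityMeasure q]
    {ι : Type*} [Countable ι] [DecidableEq ι] (φ : ι → X → ℝ) (lam : ι → ℝ)
    (hlam : ∀ i, 0 ≤ lam i)
    (hmeas : ∀ i, Measurable (φ i))
    (horth : ∀ i j, ∫ x, φ i x * φ j x ∂q = if i = j then 1 else 0)
    (k : X → X → ℝ)
    (hMercer : ∀ x x', HasSum (fun i => lam i * φ i x * φ i x') (k x x'))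
    (hL2 : MemLp (fun p : X × X => k p.1 p.2) 2 (q.prod q))
    {P : ℕ} (xs : Fin P → X)
    (hsupp : ∀ ν, ∀ U : Set X, IsOpen U → xs ν ∈ U → 0 < q U)
    (yf : X → ℝ) (σ2 : ℝ) (hσ2 : 0 < σ2)
    (K : Matrix (Fin P) (Fin P) ℝ) (hKdef : ∀ ν ρ, K ν ρ = k (xs ν) (xs ρ))
    (fhat : X → ℝ)
    (hfhat : ∀ x, fhat x = ∑ ν, ∑ ρ,
      k x (xs ν) * (K + σ2 • (1 : Matrix (Fin P) (Fin P) ℝ))⁻¹ ν ρ * yf (xs ρ))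
    (t : ι) (hproj : ∫ x, φ t x * yf x ∂q ≠ 0) (hlamt : 0 < lam t)
    (hφD : 0 < (P : ℝ)⁻¹ * ∑ ν, φ t (xs ν) ^ 2)
    (hyD : 0 < (P : ℝ)⁻¹ * ∑ ν, yf (xs ν) ^ 2)
    (ε : ℝ) (hε : ε ∈ Set.Ioo (0 : ℝ) 1)
    (hlearn : (∫ x, φ t x * fhat x ∂q) / (∫ x, φ t x * yf x ∂q) = 1 - ε) :
    (P : ℝ) ≥ σ2 * (lam t)⁻¹ * (1 - ε) * |∫ x, φ t x * yf x ∂q| /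
      Real.sqrt (((P : ℝ)⁻¹ * ∑ ν, φ t (xs ν) ^ 2) * ((P : ℝ)⁻¹ * ∑ ν, yf (xs ν) ^ 2)) := by
  have hP0 : 0 < P := by
    rcases Nat.eq_zero_or_pos P with h0 | h
    · exfalso
      subst h0
      simp at hφD
    · exact h
  have hPR : (0:ℝ) < (P:ℝ) := Nat.cast_pos.2 hP0
  set J := ∫ x, φ t x * yf x ∂q with hJ
  have hε1 : 0 < 1 - ε := by have := hε.2; simp only [Set.mem_Ioo] at hε; linarith [hε.2]
  have hnum : ∫ x, φ t x * fhat x ∂q = (1 - ε) * J := by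
    rw [div_eq_iff hproj] at hlearn
    rw [hlearn]
  have hnum_ne : (1 - ε) * J ≠ 0 := mul_ne_zero (ne_of_gt hε1) hproj
  have hgint : Integrable (fun x => φ t x * fhat x) q := by
    by_contra hcon
    rw [integral_undef hcon] at hnum
    exact hnum_ne hnum.symm
  have hksym : ∀ x y, k x y = k y x := by
    intro x y
    refine HasSum.unique (hMercer x y) ?_
    have h1 := hMercer y x
    rwa [show (fun i => lam i * φ i y * φ i x) = fun i => lam i * φ i x * φ i y from
      funext fun i => by ring] at h1
  set M : Matrix (Fin P) (Fin P) ℝ := (K + σ2 • (1 : Matrix (Fin P) (Fin P) ℝ))⁻¹ with hM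
  set c : Fin P → ℝ := fun ν => ∑ ρ, M ν ρ * yf (xs ρ) with hc
  set w : ι → ℝ := fun i => ∑ ν, c ν * φ i (xs ν) with hw
  -- quadratic-form HasSum
  have hQuad : ∀ v : Fin P → ℝ, HasSum (fun i => lam i * (∑ ν, v ν * φ i (xs ν)) ^ 2)
      (∑ ν, ∑ ρ, v ν * v ρ * k (xs ν) (xs ρ)) := by
    intro v
    have h1 : ∀ ν ρ : Fin P, HasSum (fun i => (v ν * v ρ) * (lam i * φ i (xs ν) * φ i (xs ρ)))
        ((v ν * v ρ) * k (xs ν) (xs ρ)) := fun ν ρ => (hMercer (xs ν) (xs ρ)).mul_left _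
    have h3 : HasSum (fun i => ∑ ν, ∑ ρ, (v ν * v ρ) * (lam i * φ i (xs ν) * φ i (xs ρ)))
        (∑ ν, ∑ ρ, (v ν * v ρ) * k (xs ν) (xs ρ)) :=
      hasSum_sum fun ν _ => hasSum_sum fun ρ _ => h1 ν ρ
    have e : (fun i => ∑ ν, ∑ ρ, (v ν * v ρ) * (lam i * φ i (xs ν) * φ i (xs ρ))) =
        fun i => lam i * (∑ ν, v ν * φ i (xs ν)) ^ 2 := by
      funext i
      symm
      rw [sq, Finset.sum_mul_sum, Finset.mul_sum]
      refine Finset.sum_congr rfl fun ν _ => ?_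
      rw [Finset.mul_sum]
      exact Finset.sum_congr rfl fun ρ _ => by ring
    have e2 : (∑ ν, ∑ ρ, (v ν * v ρ) * (k (xs ν) (xs ρ))) =
        ∑ ν, ∑ ρ, v ν * v ρ * k (xs ν) (xs ρ) := by
      exact Finset.sum_congr rfl fun ν _ => Finset.sum_congr rfl fun ρ _ => by ring
    rw [e, e2] at h3
    exact h3
  have hpsd : ∀ v : Fin P → ℝ, 0 ≤ v ⬝ᵥ (K *ᵥ v) := by
    intro v
    have h4 : v ⬝ᵥ (K *ᵥ v) = ∑ ν, ∑ ρ, v ν * v ρ * k (xs ν) (xs ρ) := by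
      show (∑ ν, v ν * ∑ ρ, K ν ρ * v ρ) = _
      refine Finset.sum_congr rfl fun ν _ => ?_
      rw [Finset.mul_sum]
      refine Finset.sum_congr rfl fun ρ _ => ?_
      rw [hKdef]
      ring
    rw [h4]
    exact hasSum_le (fun i => mul_nonneg (hlam i) (sq_nonneg _)) hasSum_zero (hQuad v)
  -- pointwise expansion of φ t * fhat
  have hgsum : ∀ x, HasSum (fun i => lam i * w i * (φ t x * φ i x)) (φ t x * fhat x) := by
    intro x
    have h2 : HasSum (fun i => ∑ ν, c ν * (lam i * φ i x * φ i (xs ν)))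
        (∑ ν, c ν * k x (xs ν)) :=
      hasSum_sum fun ν _ => (hMercer x (xs ν)).mul_left _
    have hval : ∑ ν, c ν * k x (xs ν) = fhat x := by
      rw [hfhat x]
      refine Finset.sum_congr rfl fun ν _ => ?_
      rw [show c ν = ∑ ρ, M ν ρ * yf (xs ρ) from rfl, Finset.sum_mul]
      exact Finset.sum_congr rfl fun ρ _ => by ring
    have e : (fun i => ∑ ν, c ν * (lam i * φ i x * φ i (xs ν))) =
        fun i => lam i * w i * φ i x := by
      funext i
      rw [show w i = ∑ ν, c ν * φ i (xs ν) from rfl, Finset.mul_sum, Finset.sum_mul]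
      exact Finset.sum_congr rfl fun ν _ => by ring
    rw [e, hval] at h2
    have h5 := h2.mul_left (φ t x)
    rwa [show (fun i => φ t x * (lam i * w i * φ i x)) =
      fun i => lam i * w i * (φ t x * φ i x) from funext fun i => by ring] at h5
  -- eigenvalue bound
  have hk2 : Integrable (fun p : X × X => k p.1 p.2 ^ 2) (q.prod q) := hL2.integrable_sq
  set Λ : ℝ := Real.sqrt (∫ p, k p.1 p.2 ^ 2 ∂(q.prod q)) with hΛdef
  have hΛ0 : 0 ≤ Λ := Real.sqrt_nonneg _
  have hΛi : ∀ i, lam i ≤ Λ := fun i =>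
    SCAux.lam_le q φ lam hlam hmeas horth k hMercer hk2 i
  -- the exact value of the learned projection
  have hcore : ∫ x, φ t x * fhat x ∂q = lam t * w t :=
    SCAux.core q φ lam hlam hmeas horth k hMercer t w (hQuad c) hΛ0 hΛi hgint hgsum
  -- matrix bound
  have hKsymT : Kᵀ = K := by
    ext ν ρ
    rw [Matrix.transpose_apply, hKdef, hKdef, hksym]
  set u0 : Fin P → ℝ := fun ν => φ t (xs ν) with hu0def
  set y0 : Fin P → ℝ := fun ν => yf (xs ν) with hy0def
  have hmb := SCAux.matrix_bound K hKsymT hpsd hσ2 u0 y0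
  have hwt : w t = u0 ⬝ᵥ (M *ᵥ y0) := by
    rw [show w t = ∑ ν, c ν * φ t (xs ν) from rfl]
    show _ = ∑ ν, u0 ν * (M *ᵥ y0) ν
    refine Finset.sum_congr rfl fun ν _ => ?_
    show c ν * φ t (xs ν) = φ t (xs ν) * ∑ ρ, M ν ρ * yf (xs ρ)
    rw [show c ν = ∑ ρ, M ν ρ * yf (xs ρ) from rfl]
    ring
  set S1 : ℝ := ∑ ν, φ t (xs ν) ^ 2 with hS1def
  set S2 : ℝ := ∑ ν, yf (xs ν) ^ 2 with hS2def
  have hdu : u0 ⬝ᵥ u0 = S1 := Finset.sum_congr rfl fun ν _ => (pow_two _).symm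
  have hdy : y0 ⬝ᵥ y0 = S2 := Finset.sum_congr rfl fun ν _ => (pow_two _).symm
  have hS1 : 0 < S1 := by
    have h1 : (P:ℝ)⁻¹ * S1 * P = S1 := by field_simp
    nlinarith [mul_pos hφD hPR]
  have hS2 : 0 < S2 := by
    have h1 : (P:ℝ)⁻¹ * S2 * P = S2 := by field_simp
    nlinarith [mul_pos hyD hPR]
  rw [hdu, hdy] at hmb
  -- final arithmetic
  have habs : (1 - ε) * |J| = lam t * |u0 ⬝ᵥ (M *ᵥ y0)| := by
    have h1 : (1 - ε) * J = lam t * (u0 ⬝ᵥ (M *ᵥ y0)) := by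
      rw [← hnum, hcore, hwt]
    have h2 := congrArg abs h1
    rwa [abs_mul, abs_mul, abs_of_pos hε1, abs_of_pos hlamt] at h2
  have hden : Real.sqrt (((P:ℝ)⁻¹ * S1) * ((P:ℝ)⁻¹ * S2)) =
      (P:ℝ)⁻¹ * (Real.sqrt S1 * Real.sqrt S2) := by
    rw [show ((P:ℝ)⁻¹ * S1) * ((P:ℝ)⁻¹ * S2) = ((P:ℝ)⁻¹)^2 * (S1 * S2) from by ring,
      Real.sqrt_mul (sq_nonneg _), Real.sqrt_sq (by positivity),
      Real.sqrt_mul hS1.le]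
  have hdenpos : 0 < (P:ℝ)⁻¹ * (Real.sqrt S1 * Real.sqrt S2) :=
    mul_pos (by positivity) (mul_pos (Real.sqrt_pos.2 hS1) (Real.sqrt_pos.2 hS2))
  rw [ge_iff_le, hden, div_le_iff₀ hdenpos]
  have e5 : σ2 * (lam t)⁻¹ * (1 - ε) * |J| = σ2 * |u0 ⬝ᵥ (M *ᵥ y0)| := by
    rw [show σ2 * (lam t)⁻¹ * (1 - ε) * |J| = σ2 * (lam t)⁻¹ * ((1 - ε) * |J|) from by ring,
      habs]
    field_simp
  rw [e5]
  calc σ2 * |u0 ⬝ᵥ (M *ᵥ y0)| ≤ σ2 * (σ2⁻¹ * (Real.sqrt S1 * Real.sqrt S2)) :=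
        mul_le_mul_of_nonneg_left hmb hσ2.le
    _ = Real.sqrt S1 * Real.sqrt S2 := by field_simp
    _ = (P:ℝ) * ((P:ℝ)⁻¹ * (Real.sqrt S1 * Real.sqrt S2)) := by field_simp
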